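/- With v_{a,b} = 2^{−n/2}(exp((2πi/4)·tr((a+2b)x)))_{x ∈ T_n}, if a ≠ a' in T_n then |⟨v_{a,b}, v_{a',b'}⟩|² = 2^{−n} for all b, b' ∈ T_n; that is, M_a and M_{a'} are mutually unbiased bases of ℂ^{2ⁿ}. -/

import Mathlib

open scoped InnerProductSpace

/-- The Galois ring `GR(4,n) = ℤ₄[x]/⟨h(x)⟩`. -/
noncomputable abbrev GR (h : Polynomial (ZMod 4)) : Type :=
  Polynomial (ZMod 4) ⧸ Ideal.span {h}

/-- `ξ = x + ⟨h(x)⟩ ∈ GR(4,n)`. -/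
noncomputable def xi (h : Polynomial (ZMod 4)) : GR h :=
  Ideal.Quotient.mk (Ideal.span {h}) Polynomial.X

open Classical in
/-- The Teichmüller set `T_n = {0, 1, ξ, …, ξ^{2ⁿ−2}}`. -/
noncomputable def Teich (n : ℕ) (h : Polynomial (ZMod 4)) : Finset (GR h) :=
  insert 0 ((Finset.range (2 ^ n - 1)).image fun k => xi h ^ k)

/-- `h` is a monic basic primitive polynomial of degree `n`: it is monic of
degree `n`, its reduction mod 2 is a primitive polynomial over `ℤ₂`
(irreducible, with root `x` of multiplicative order `2ⁿ − 1`), and consequently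
`ξ` has multiplicative order `2ⁿ − 1` in `GR(4,n)`. -/
structure IsBasicPrimitive (n : ℕ) (h : Polynomial (ZMod 4)) : Prop where
  monic : h.Monic
  deg : h.natDegree = n
  irred : Irreducible (h.map (ZMod.castHom (by norm_num : (2:ℕ) ∣ 4) (ZMod 2)))
  prim : orderOf (Ideal.Quotient.mk
      (Ideal.span {h.map (ZMod.castHom (by norm_num : (2:ℕ) ∣ 4) (ZMod 2))})
      Polynomial.X) = 2 ^ n - 1
  xi_order : orderOf (xi h) = 2 ^ n - 1

/-- The vector `v_{a,b} = 2^{−n/2} (exp((2πi/4)·tr((a+2b)x)))_{x ∈ T_n}` of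
`ℂ^{2ⁿ}`, indexed by the Teichmüller set `T_n`. -/
noncomputable def mv (n : ℕ) (h : Polynomial (ZMod 4)) (tr : GR h → ZMod 4)
    (a b : GR h) : EuclideanSpace ℂ (Teich n h) :=
  WithLp.toLp 2 fun x => (1 / Real.sqrt (2 ^ n) : ℂ) *
    Complex.exp (2 * Real.pi * Complex.I *
      ((tr ((a + 2 * b) * (x : GR h))).val : ℂ) / 4)

namespace MaMUB

noncomputable def h2 (h : Polynomial (ZMod 4)) : Polynomial (ZMod 2) :=
  h.map (ZMod.castHom (by norm_num : (2:ℕ) ∣ 4) (ZMod 2))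

noncomputable abbrev Fq (h : Polynomial (ZMod 4)) := AdjoinRoot (h2 h)

noncomputable def pr (h : Polynomial (ZMod 4)) : GR h →+* Fq h :=
  Ideal.Quotient.lift (Ideal.span {h})
    ((AdjoinRoot.mk (h2 h)).comp
      (Polynomial.mapRingHom (ZMod.castHom (by norm_num : (2:ℕ) ∣ 4) (ZMod 2))))
    (by
      intro a ha
      rw [Ideal.mem_span_singleton] at ha
      obtain ⟨r, rfl⟩ := ha
      simp only [RingHom.comp_apply, Polynomial.coe_mapRingHom, Polynomial.map_mul, map_mul]
      rw [show (h.map (ZMod.castHom (by norm_num : (2:ℕ) ∣ 4) (ZMod 2))) = h2 h from rfl,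
        AdjoinRoot.mk_self, zero_mul])

lemma pr_mk (h : Polynomial (ZMod 4)) (p : Polynomial (ZMod 4)) :
    pr h (Ideal.Quotient.mk (Ideal.span {h}) p) =
      AdjoinRoot.mk (h2 h) (p.map (ZMod.castHom (by norm_num : (2:ℕ) ∣ 4) (ZMod 2))) := rfl

lemma pr_xi (h : Polynomial (ZMod 4)) : pr h (xi h) = AdjoinRoot.root (h2 h) := by
  rw [xi, pr_mk, Polynomial.map_X, AdjoinRoot.root]

lemma pr_algebraMap (h : Polynomial (ZMod 4)) (r : ZMod 4) :
    pr h (algebraMap (ZMod 4) (GR h) r) =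
      algebraMap (ZMod 2) (Fq h) (ZMod.castHom (by norm_num : (2:ℕ) ∣ 4) (ZMod 2) r) := by
  have : (pr h).comp (algebraMap (ZMod 4) (GR h)) =
      (algebraMap (ZMod 2) (Fq h)).comp (ZMod.castHom (by norm_num : (2:ℕ) ∣ 4) (ZMod 2)) :=
    Subsingleton.elim _ _
  exact DFunLike.congr_fun this r

lemma pr_two (h : Polynomial (ZMod 4)) : pr h (2 : GR h) = 0 := by
  have h2 : (2 : GR h) = algebraMap (ZMod 4) (GR h) 2 := by
    rw [map_ofNat]
  rw [h2, pr_algebraMap,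
    show (ZMod.castHom (by norm_num : (2:ℕ) ∣ 4) (ZMod 2)) (2 : ZMod 4) = 0 by decide, map_zero]

lemma four_eq_zero (h : Polynomial (ZMod 4)) : (4 : GR h) = 0 := by
  have : (4 : GR h) = algebraMap (ZMod 4) (GR h) 4 := by rw [map_ofNat]
  rw [this, show (4 : ZMod 4) = 0 by decide, map_zero]

lemma sq_add_two_mul (h : Polynomial (ZMod 4)) (u v : GR h) : (u + 2*v)^2 = u^2 := by
  linear_combination (u*v + v*v) * four_eq_zero h

end MaMUB

namespace MaMUB

variable {n : ℕ} {h : Polynomial (ZMod 4)}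

lemma h2_monic (hbp : IsBasicPrimitive n h) : (h2 h).Monic := hbp.monic.map _

lemma h2_natDegree (hbp : IsBasicPrimitive n h) : (h2 h).natDegree = n := by
  rw [h2, hbp.monic.natDegree_map, hbp.deg]

lemma h2_irred (hbp : IsBasicPrimitive n h) : Irreducible (h2 h) := hbp.irred

lemma n_pos (hbp : IsBasicPrimitive n h) : 0 < n := by
  have h1 := h2_natDegree hbp
  have h2 := (h2_irred hbp).natDegree_pos
  omega

lemma two_pow_sub_one_pos (hbp : IsBasicPrimitive n h) : 0 < 2 ^ n - 1 := by
  have := n_pos hbp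
  have : 2 ≤ 2 ^ n := by
    calc 2 = 2^1 := rfl
    _ ≤ 2^n := Nat.pow_le_pow_right (by norm_num) this
  omega

noncomputable def grBasis (hbp : IsBasicPrimitive n h) :
    Module.Basis (Fin h.natDegree) (ZMod 4) (GR h) :=
  ((AdjoinRoot.powerBasis' hbp.monic).basis : _)

lemma grBasis_apply (hbp : IsBasicPrimitive n h) (i : Fin h.natDegree) :
    grBasis hbp i = xi h ^ (i : ℕ) := by
  have := (AdjoinRoot.powerBasis' hbp.monic).basis_eq_pow i
  rw [AdjoinRoot.powerBasis'_gen] at this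
  exact this

noncomputable def grFintype (hbp : IsBasicPrimitive n h) : Fintype (GR h) :=
  Module.fintypeOfFintype (grBasis hbp)

lemma gr_card (hbp : IsBasicPrimitive n h) [Fintype (GR h)] :
    Fintype.card (GR h) = 4 ^ n := by
  rw [Module.card_fintype (grBasis hbp), ZMod.card, Fintype.card_fin, hbp.deg]

lemma algebraMap_inj (hbp : IsBasicPrimitive n h) :
    Function.Injective (algebraMap (ZMod 4) (GR h)) := by
  rw [injective_iff_map_eq_zero]
  intro r hr
  have hdeg : 0 < h.natDegree := by rw [hbp.deg]; exact n_pos hbp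
  have h1 : r • grBasis hbp ⟨0, hdeg⟩ = 0 := by
    rw [grBasis_apply, pow_zero, ← Algebra.algebraMap_eq_smul_one, hr]
  have h2 := congrArg (grBasis hbp).repr h1
  rw [map_smul, map_zero, Module.Basis.repr_self] at h2
  have h3 := DFunLike.congr_fun h2 ⟨0, hdeg⟩
  simpa using h3

lemma exists_half (hbp : IsBasicPrimitive n h) (z : GR h) (hz : 2 * z = 0) :
    ∃ w : GR h, z = 2 * w := by
  classical
  set b := grBasis hbp with hbdef
  have hc : ∀ i, ∃ d : ZMod 4, b.repr z i = 2 * d := by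
    intro i
    have h1 : 2 * z = z + z := two_mul z
    have h2 : b.repr z i + b.repr z i = 0 := by
      have := congrArg (fun v => b.repr v i) hz
      rw [h1, map_add] at this
      simpa using this
    revert h2
    generalize b.repr z i = c
    revert c; decide
  choose d hd using hc
  refine ⟨∑ i, d i • b i, ?_⟩
  conv_lhs => rw [← Module.Basis.sum_repr b z]
  rw [Finset.mul_sum]
  refine Finset.sum_congr rfl fun i _ => ?_
  rw [two_mul, ← add_smul, ← two_mul, ← hd]

/-! ### The residue field -/

noncomputable def fqFintype (hbp : IsBasicPrimitive n h) : Fintype (Fq h) :=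
  Module.fintypeOfFintype (AdjoinRoot.powerBasis' (h2_monic hbp)).basis

lemma fq_card (hbp : IsBasicPrimitive n h) [Fintype (Fq h)] :
    Fintype.card (Fq h) = 2 ^ n := by
  rw [Module.card_fintype (AdjoinRoot.powerBasis' (h2_monic hbp)).basis, ZMod.card,
    Fintype.card_fin, AdjoinRoot.powerBasis'_dim, h2_natDegree hbp]

lemma root_order (hbp : IsBasicPrimitive n h) :
    orderOf (AdjoinRoot.root (h2 h)) = 2 ^ n - 1 := hbp.prim

lemma root_ne_zero (hbp : IsBasicPrimitive n h) : AdjoinRoot.root (h2 h) ≠ 0 := by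
  haveI : Fact (Irreducible (h2 h)) := ⟨h2_irred hbp⟩
  intro h0
  have h1 := pow_orderOf_eq_one (AdjoinRoot.root (h2 h))
  rw [root_order hbp, h0,
    zero_pow (by have := two_pow_sub_one_pos hbp; omega : 2 ^ n - 1 ≠ 0)] at h1
  exact zero_ne_one h1

lemma root_pow_inj (hbp : IsBasicPrimitive n h) {j k : ℕ}
    (hj : j < 2 ^ n - 1) (hk : k < 2 ^ n - 1)
    (hjk : AdjoinRoot.root (h2 h) ^ j = AdjoinRoot.root (h2 h) ^ k) : j = k := by
  haveI : Fact (Irreducible (h2 h)) := ⟨h2_irred hbp⟩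
  set u : (Fq h)ˣ := Units.mk0 _ (root_ne_zero hbp) with hu
  have hou : orderOf u = 2 ^ n - 1 := by
    rw [← orderOf_units (y := u)]; exact root_order hbp
  have huv : u ^ j = u ^ k := by
    ext
    push_cast
    exact hjk
  have := pow_injOn_Iio_orderOf (x := u) (by rw [hou]; exact hj) (by rw [hou]; exact hk) huv
  exact this

lemma pr_xi_pow (m : ℕ) : pr h (xi h ^ m) = AdjoinRoot.root (h2 h) ^ m := by
  rw [map_pow, pr_xi]

lemma mem_teich_iff {t : GR h} :
    t ∈ Teich n h ↔ t = 0 ∨ ∃ k, k < 2 ^ n - 1 ∧ t = xi h ^ k := by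
  simp only [Teich, Finset.mem_insert, Finset.mem_image, Finset.mem_range]
  constructor
  · rintro (rfl | ⟨k, hk, rfl⟩)
    · exact Or.inl rfl
    · exact Or.inr ⟨k, hk, rfl⟩
  · rintro (rfl | ⟨k, hk, rfl⟩)
    · exact Or.inl rfl
    · exact Or.inr ⟨k, hk, rfl⟩

lemma zero_mem_teich (hbp : IsBasicPrimitive n h) : (0 : GR h) ∈ Teich n h :=
  mem_teich_iff.mpr (Or.inl rfl)

lemma xi_pow_mem_teich (hbp : IsBasicPrimitive n h) (m : ℕ) : xi h ^ m ∈ Teich n h := by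
  refine mem_teich_iff.mpr (Or.inr ⟨m % (2 ^ n - 1), ?_, ?_⟩)
  · exact Nat.mod_lt _ (two_pow_sub_one_pos hbp)
  · rw [← hbp.xi_order, pow_mod_orderOf]

lemma one_mem_teich (hbp : IsBasicPrimitive n h) : (1 : GR h) ∈ Teich n h := by
  simpa using xi_pow_mem_teich hbp 0

lemma pr_injOn_teich (hbp : IsBasicPrimitive n h) :
    ∀ s ∈ Teich n h, ∀ t ∈ Teich n h, pr h s = pr h t → s = t := by
  haveI : Fact (Irreducible (h2 h)) := ⟨h2_irred hbp⟩
  intro s hs t ht hst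
  rcases mem_teich_iff.mp hs with rfl | ⟨j, hj, rfl⟩ <;>
    rcases mem_teich_iff.mp ht with rfl | ⟨k, hk, rfl⟩
  · rfl
  · rw [map_zero, pr_xi_pow] at hst
    exact absurd hst.symm (pow_ne_zero _ (root_ne_zero hbp))
  · rw [map_zero, pr_xi_pow] at hst
    exact absurd hst (pow_ne_zero _ (root_ne_zero hbp))
  · rw [pr_xi_pow, pr_xi_pow] at hst
    rw [root_pow_inj hbp hj hk hst]

lemma teich_card (hbp : IsBasicPrimitive n h) : (Teich n h).card = 2 ^ n := by
  classical
  haveI : Fact (Irreducible (h2 h)) := ⟨h2_irred hbp⟩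
  rw [Teich]
  rw [Finset.card_insert_of_notMem, Finset.card_image_of_injOn, Finset.card_range]
  · have := two_pow_sub_one_pos hbp
    omega
  · intro j hj k hk hjk
    simp only [Finset.coe_range, Set.mem_Iio] at hj hk
    have : pr h (xi h ^ j) = pr h (xi h ^ k) := congrArg (pr h) hjk
    rw [pr_xi_pow, pr_xi_pow] at this
    exact root_pow_inj hbp hj hk this
  · intro h0
    rw [Finset.mem_image] at h0
    obtain ⟨k, _, hk⟩ := h0
    have : pr h (xi h ^ k) = 0 := by rw [hk, map_zero]
    rw [pr_xi_pow] at this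
    exact pow_ne_zero _ (root_ne_zero hbp) this

lemma pr_surjOn_teich (hbp : IsBasicPrimitive n h) (w : Fq h) :
    ∃ t ∈ Teich n h, pr h t = w := by
  classical
  haveI := fqFintype hbp
  have hsub : (Teich n h).image (pr h) = Finset.univ := by
    apply Finset.eq_univ_of_card
    rw [Finset.card_image_of_injOn (fun s hs t ht => pr_injOn_teich hbp s hs t ht),
      teich_card hbp, fq_card hbp]
  have : w ∈ (Teich n h).image (pr h) := by rw [hsub]; exact Finset.mem_univ w
  rw [Finset.mem_image] at this
  obtain ⟨t, ht, hpt⟩ := this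
  exact ⟨t, ht, hpt⟩

end MaMUB

namespace MaMUB

variable {n : ℕ} {h : Polynomial (ZMod 4)}

/-! ### Teichmüller structure -/

lemma teich_mul (hbp : IsBasicPrimitive n h) {s t : GR h}
    (hs : s ∈ Teich n h) (ht : t ∈ Teich n h) : s * t ∈ Teich n h := by
  rcases mem_teich_iff.mp hs with rfl | ⟨j, hj, rfl⟩ <;>
    rcases mem_teich_iff.mp ht with rfl | ⟨k, hk, rfl⟩
  · simpa using zero_mem_teich hbp
  · simpa using zero_mem_teich hbp
  · simpa using zero_mem_teich hbp
  · rw [← pow_add]; exact xi_pow_mem_teich hbp _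

lemma teich_pow (hbp : IsBasicPrimitive n h) {t : GR h}
    (ht : t ∈ Teich n h) (m : ℕ) : t ^ m ∈ Teich n h := by
  rcases mem_teich_iff.mp ht with rfl | ⟨k, hk, rfl⟩
  · rcases Nat.eq_zero_or_pos m with rfl | hm
    · simpa using one_mem_teich hbp
    · rw [zero_pow (by omega)]; exact zero_mem_teich hbp
  · rw [← pow_mul]; exact xi_pow_mem_teich hbp _

lemma teich_pow_card (hbp : IsBasicPrimitive n h) {t : GR h}
    (ht : t ∈ Teich n h) : t ^ (2 ^ n) = t := by
  rcases mem_teich_iff.mp ht with rfl | ⟨k, hk, rfl⟩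
  · exact zero_pow (by positivity)
  · rw [← pow_mul]
    have hk2 : k * 2 ^ n = (2 ^ n - 1) * k + k := by
      have h1 : 1 ≤ 2 ^ n := Nat.one_le_two_pow
      have : (2 ^ n - 1) * k + k = (2 ^ n - 1 + 1) * k := by ring
      rw [this, Nat.sub_add_cancel h1, Nat.mul_comm]
    rw [hk2, pow_add, pow_mul, ← hbp.xi_order, pow_orderOf_eq_one, one_pow, one_mul]

/-- The square-root map on the Teichmüller set. -/
noncomputable def sqr (n : ℕ) {h : Polynomial (ZMod 4)} (t : GR h) : GR h :=
  t ^ (2 ^ (n - 1))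

lemma sqr_mem (hbp : IsBasicPrimitive n h) {t : GR h} (ht : t ∈ Teich n h) :
    sqr n t ∈ Teich n h := teich_pow hbp ht _

lemma sqr_mul (s t : GR h) : sqr n (s * t) = sqr n s * sqr n t := mul_pow _ _ _

lemma sqr_sq (hbp : IsBasicPrimitive n h) {t : GR h} (ht : t ∈ Teich n h) :
    sqr n t ^ 2 = t := by
  rw [sqr, ← pow_mul]
  have : 2 ^ (n - 1) * 2 = 2 ^ n := by
    have := n_pos hbp
    rw [← pow_succ, Nat.sub_add_cancel (by omega)]
  rw [this, teich_pow_card hbp ht]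

lemma teich_decomp (hbp : IsBasicPrimitive n h) (z : GR h) :
    ∃ a ∈ Teich n h, ∃ b ∈ Teich n h, z = a + 2 * b := by
  classical
  haveI := grFintype hbp
  set f : GR h × GR h → GR h := fun p => p.1 + 2 * p.2 with hf
  have hinj : Set.InjOn f ((Teich n h) ×ˢ (Teich n h) : Finset (GR h × GR h)) := by
    rintro ⟨x1, y1⟩ hp ⟨x2, y2⟩ hq hpq
    simp only [Finset.coe_product, Set.mem_prod, Finset.mem_coe] at hp hq
    simp only [hf] at hpq
    have hx : x1 = x2 := by
      apply pr_injOn_teich hbp _ hp.1 _ hq.1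
      have := congrArg (pr h) hpq
      simpa [map_add, map_mul, pr_two] using this
    subst hx
    have h2y : 2 * (y1 - y2) = 0 := by linear_combination hpq
    obtain ⟨w, hw⟩ := exists_half hbp _ h2y
    have hy : pr h y1 = pr h y2 := by
      have := congrArg (pr h) hw
      rw [map_sub, map_mul, pr_two, zero_mul] at this
      linear_combination this
    exact Prod.ext rfl (pr_injOn_teich hbp _ hp.2 _ hq.2 hy)
  have hcard : (((Teich n h) ×ˢ (Teich n h)).image f).card = Fintype.card (GR h) := by
    rw [Finset.card_image_of_injOn hinj, Finset.card_product, teich_card hbp,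
      gr_card hbp, ← Nat.mul_pow]
  have huniv : ((Teich n h) ×ˢ (Teich n h)).image f = Finset.univ :=
    Finset.eq_univ_of_card _ hcard
  have hz : z ∈ ((Teich n h) ×ˢ (Teich n h)).image f := by
    rw [huniv]; exact Finset.mem_univ z
  rw [Finset.mem_image] at hz
  obtain ⟨⟨x, y⟩, hxy, hzz⟩ := hz
  rw [Finset.mem_product] at hxy
  exact ⟨x, hxy.1, y, hxy.2, hzz.symm⟩

lemma sq_teich (hbp : IsBasicPrimitive n h) (z : GR h) : z ^ 2 ∈ Teich n h := by
  obtain ⟨a, ha, b, hb, rfl⟩ := teich_decomp hbp z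
  rw [sq_add_two_mul]
  exact teich_pow hbp ha 2

/-- `pT s t` is `s ⊕ t`, the Teichmüller representative of `s + t`. -/
noncomputable def pT (n : ℕ) {h : Polynomial (ZMod 4)} (s t : GR h) : GR h :=
  (sqr n s + sqr n t) ^ 2

lemma pT_mem (hbp : IsBasicPrimitive n h) (s t : GR h) : pT n s t ∈ Teich n h :=
  sq_teich hbp _

lemma pT_identity (hbp : IsBasicPrimitive n h) {s t : GR h}
    (hs : s ∈ Teich n h) (ht : t ∈ Teich n h) :
    pT n s t = s + t + 2 * sqr n (s * t) := by
  have h1 : sqr n s ^ 2 = s := sqr_sq hbp hs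
  have h2 : sqr n t ^ 2 = t := sqr_sq hbp ht
  have h3 : sqr n s * sqr n t = sqr n (s * t) := (sqr_mul s t).symm
  rw [pT]
  linear_combination h1 + h2 + 2 * h3

lemma two_mul_add (hbp : IsBasicPrimitive n h) {s t : GR h}
    (hs : s ∈ Teich n h) (ht : t ∈ Teich n h) :
    2 * (s + t) = 2 * pT n s t := by
  rw [pT_identity hbp hs ht]
  linear_combination (-(sqr n (s * t))) * four_eq_zero h

lemma teich_inv (hbp : IsBasicPrimitive n h) {u : GR h}
    (hu : u ∈ Teich n h) (hu0 : u ≠ 0) : ∃ w ∈ Teich n h, w * u = 1 := by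
  refine ⟨u ^ (2 ^ n - 2), teich_pow hbp hu _, ?_⟩
  rcases mem_teich_iff.mp hu with rfl | ⟨k, hk, rfl⟩
  · exact absurd rfl hu0
  · rw [← pow_succ]
    have : 2 ^ n - 2 + 1 = 2 ^ n - 1 := by
      have := two_pow_sub_one_pos hbp; omega
    rw [this, ← pow_mul, Nat.mul_comm, pow_mul, ← hbp.xi_order, pow_orderOf_eq_one, one_pow]

end MaMUB

namespace MaMUB

variable {n : ℕ} {h : Polynomial (ZMod 4)}

/-! ### Frobenius and trace -/

lemma sigma_add (hbp : IsBasicPrimitive n h) {σ : GR h → GR h}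
    (hσ : ∀ a b : GR h, a ∈ Teich n h → b ∈ Teich n h → σ (a + 2 * b) = a ^ 2 + 2 * b ^ 2)
    (z w : GR h) : σ (z + w) = σ z + σ w := by
  obtain ⟨a, ha, b, hb, rfl⟩ := teich_decomp hbp z
  obtain ⟨c, hc, d, hd, rfl⟩ := teich_decomp hbp w
  have hmT : sqr n (a*c) ∈ Teich n h := sqr_mem hbp (teich_mul hbp ha hc)
  have hPT : pT n (sqr n (a*c)) b ∈ Teich n h := pT_mem hbp _ _
  have hET : pT n (pT n (sqr n (a*c)) b) d ∈ Teich n h := pT_mem hbp _ _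
  have e1 : pT n a c = a + c + 2 * sqr n (a*c) := pT_identity hbp ha hc
  have e2 : pT n (sqr n (a*c)) b = sqr n (a*c) + b + 2 * sqr n (sqr n (a*c) * b) :=
    pT_identity hbp hmT hb
  have e3 : pT n (pT n (sqr n (a*c)) b) d
      = pT n (sqr n (a*c)) b + d + 2 * sqr n (pT n (sqr n (a*c)) b * d) :=
    pT_identity hbp hPT hd
  have hm : sqr n (a*c) ^ 2 = a * c := sqr_sq hbp (teich_mul hbp ha hc)
  have hzw : (a + 2*b) + (c + 2*d) = pT n a c + 2 * pT n (pT n (sqr n (a*c)) b) d := by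
    linear_combination (-1 : GR h) * e1 + (-2 : GR h) * e3 + (-2 : GR h) * e2 +
      (-(sqr n (a*c) + sqr n (sqr n (a*c) * b) + sqr n (pT n (sqr n (a*c)) b * d))) *
        four_eq_zero h
  rw [hσ a b ha hb, hσ c d hc hd, hzw, hσ _ _ (pT_mem hbp a c) hET]
  rw [e1, e3, e2]
  linear_combination (-2 : GR h) * hm +
    (2*(sqr n (a*c))^2 + sqr n (a*c)*(a+c) + sqr n (a*c)*b + sqr n (a*c)*d + b*d +
      2*(sqr n (a*c)+b+d)*(sqr n (sqr n (a*c) * b) + sqr n ((sqr n (a*c) + b + 2 * sqr n (sqr n (a*c) * b)) * d)) +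
      2*(sqr n (sqr n (a*c) * b) + sqr n ((sqr n (a*c) + b + 2 * sqr n (sqr n (a*c) * b)) * d))^2) *
      four_eq_zero h

lemma sigma_zero (hbp : IsBasicPrimitive n h) {σ : GR h → GR h}
    (hσ : ∀ a b : GR h, a ∈ Teich n h → b ∈ Teich n h → σ (a + 2 * b) = a ^ 2 + 2 * b ^ 2) :
    σ 0 = 0 := by
  have := hσ 0 0 (zero_mem_teich hbp) (zero_mem_teich hbp)
  simpa using this

lemma sigma_iter_add (hbp : IsBasicPrimitive n h) {σ : GR h → GR h}
    (hσ : ∀ a b : GR h, a ∈ Teich n h → b ∈ Teich n h → σ (a + 2 * b) = a ^ 2 + 2 * b ^ 2)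
    (k : ℕ) (z w : GR h) : σ^[k] (z + w) = σ^[k] z + σ^[k] w := by
  induction k generalizing z w with
  | zero => simp
  | succ k ih =>
    rw [Function.iterate_succ_apply, Function.iterate_succ_apply, Function.iterate_succ_apply,
      sigma_add hbp hσ, ih]

lemma sigma_iter_zero (hbp : IsBasicPrimitive n h) {σ : GR h → GR h}
    (hσ : ∀ a b : GR h, a ∈ Teich n h → b ∈ Teich n h → σ (a + 2 * b) = a ^ 2 + 2 * b ^ 2)
    (k : ℕ) : σ^[k] 0 = 0 := by
  induction k with
  | zero => simp
  | succ k ih => rw [Function.iterate_succ_apply, sigma_zero hbp hσ, ih]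

section Trace

variable (hbp : IsBasicPrimitive n h) {σ : GR h → GR h}
  (hσ : ∀ a b : GR h, a ∈ Teich n h → b ∈ Teich n h → σ (a + 2 * b) = a ^ 2 + 2 * b ^ 2)
  {tr : GR h → ZMod 4}
  (htr : ∀ r : GR h, algebraMap (ZMod 4) (GR h) (tr r) = ∑ k ∈ Finset.range n, σ^[k] r)

include hbp hσ htr

lemma tr_add (z w : GR h) : tr (z + w) = tr z + tr w := by
  apply algebraMap_inj hbp
  rw [map_add, htr, htr, htr, ← Finset.sum_add_distrib]
  exact Finset.sum_congr rfl fun k _ => sigma_iter_add hbp hσ k z w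

lemma tr_zero : tr 0 = 0 := by
  apply algebraMap_inj hbp
  rw [map_zero, htr]
  exact Finset.sum_eq_zero fun k _ => sigma_iter_zero hbp hσ k

lemma tr_sub (z w : GR h) : tr (z - w) = tr z - tr w := by
  have := tr_add hbp hσ htr (z - w) w
  rw [sub_add_cancel] at this
  linear_combination -this

lemma tr_two (z : GR h) : tr (2 * z) = 2 * tr z := by
  have := tr_add hbp hσ htr z z
  rw [← two_mul] at this
  rw [this, two_mul]

end Trace

def cst : ZMod 4 →+* ZMod 2 := ZMod.castHom (by norm_num : (2:ℕ) ∣ 4) (ZMod 2)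

lemma pr_sigma (hbp : IsBasicPrimitive n h) {σ : GR h → GR h}
    (hσ : ∀ a b : GR h, a ∈ Teich n h → b ∈ Teich n h → σ (a + 2 * b) = a ^ 2 + 2 * b ^ 2)
    (z : GR h) : pr h (σ z) = (pr h z) ^ 2 := by
  obtain ⟨a, ha, b, hb, rfl⟩ := teich_decomp hbp z
  rw [hσ a b ha hb]
  simp [map_add, map_mul, map_pow, pr_two]

lemma pr_sigma_iter (hbp : IsBasicPrimitive n h) {σ : GR h → GR h}
    (hσ : ∀ a b : GR h, a ∈ Teich n h → b ∈ Teich n h → σ (a + 2 * b) = a ^ 2 + 2 * b ^ 2)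
    (k : ℕ) (z : GR h) : pr h (σ^[k] z) = (pr h z) ^ (2 ^ k) := by
  induction k generalizing z with
  | zero => simp
  | succ k ih =>
    rw [Function.iterate_succ_apply, ih, pr_sigma hbp hσ, ← pow_mul, pow_succ, Nat.mul_comm]

lemma pr_tr (hbp : IsBasicPrimitive n h) {σ : GR h → GR h}
    (hσ : ∀ a b : GR h, a ∈ Teich n h → b ∈ Teich n h → σ (a + 2 * b) = a ^ 2 + 2 * b ^ 2)
    {tr : GR h → ZMod 4}
    (htr : ∀ r : GR h, algebraMap (ZMod 4) (GR h) (tr r) = ∑ k ∈ Finset.range n, σ^[k] r)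
    (z : GR h) :
    algebraMap (ZMod 2) (Fq h) (cst (tr z)) = ∑ k ∈ Finset.range n, (pr h z) ^ (2 ^ k) := by
  have h1 := congrArg (pr h) (htr z)
  rw [pr_algebraMap, map_sum] at h1
  rw [show (ZMod.castHom (by norm_num : (2:ℕ) ∣ 4) (ZMod 2)) = cst from rfl] at h1
  rw [h1]
  exact Finset.sum_congr rfl fun k _ => pr_sigma_iter hbp hσ k z

lemma exists_trace_ne_zero (hbp : IsBasicPrimitive n h) :
    ∃ w : Fq h, ∑ k ∈ Finset.range n, w ^ (2 ^ k) ≠ 0 := by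
  classical
  haveI : Fact (Irreducible (h2 h)) := ⟨h2_irred hbp⟩
  haveI := fqFintype hbp
  by_contra hall
  push_neg at hall
  set Q : Polynomial (Fq h) := ∑ k ∈ Finset.range n, Polynomial.X ^ (2 ^ k) with hQ
  have hQeval : ∀ w : Fq h, Q.eval w = 0 := by
    intro w
    rw [hQ, Polynomial.eval_finset_sum]
    simpa using hall w
  have hdeg : Q.natDegree ≤ 2 ^ (n - 1) := by
    apply Polynomial.natDegree_sum_le_of_forall_le
    intro k hk
    rw [Polynomial.natDegree_X_pow]
    exact Nat.pow_le_pow_right (by norm_num) (by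
      simp only [Finset.mem_range] at hk; omega)
  have hQzero : Q = 0 := by
    apply Polynomial.eq_zero_of_natDegree_lt_card_of_eval_eq_zero' Q Finset.univ
      (fun i _ => hQeval i)
    calc Q.natDegree ≤ 2 ^ (n - 1) := hdeg
      _ < 2 ^ n := Nat.pow_lt_pow_right (by norm_num) (by have := n_pos hbp; omega)
      _ = Fintype.card (Fq h) := (fq_card hbp).symm
      _ = Finset.univ.card := Finset.card_univ.symm
  have hcoeff : Q.coeff (2 ^ (n - 1)) = 1 := by
    rw [hQ, Polynomial.finset_sum_coeff]
    rw [Finset.sum_eq_single (n - 1)]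
    · simp
    · intro k hk hkne
      rw [Polynomial.coeff_X_pow]
      have hne : ¬(2 ^ (n - 1) = 2 ^ k) :=
        fun hc => hkne (Nat.pow_right_injective (by norm_num) hc.symm)
      simp [hne]
    · intro hn
      exact absurd (Finset.mem_range.mpr (by have := n_pos hbp; omega)) hn
  rw [hQzero] at hcoeff
  simp at hcoeff

lemma exists_tr_one (hbp : IsBasicPrimitive n h) {σ : GR h → GR h}
    (hσ : ∀ a b : GR h, a ∈ Teich n h → b ∈ Teich n h → σ (a + 2 * b) = a ^ 2 + 2 * b ^ 2)
    {tr : GR h → ZMod 4}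
    (htr : ∀ r : GR h, algebraMap (ZMod 4) (GR h) (tr r) = ∑ k ∈ Finset.range n, σ^[k] r)
    {c : GR h} (hc : pr h c ≠ 0) :
    ∃ t ∈ Teich n h, cst (tr (c * t)) = 1 := by
  haveI : Fact (Irreducible (h2 h)) := ⟨h2_irred hbp⟩
  obtain ⟨w, hw⟩ := exists_trace_ne_zero hbp
  obtain ⟨t, ht, hpt⟩ := pr_surjOn_teich hbp (w / pr h c)
  refine ⟨t, ht, ?_⟩
  have h1 : pr h (c * t) = w := by
    rw [map_mul, hpt, mul_div_cancel₀ _ hc]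
  have h2 := pr_tr hbp hσ htr (c * t)
  rw [h1] at h2
  have h3 : algebraMap (ZMod 2) (Fq h) (cst (tr (c * t))) ≠ 0 := by rw [h2]; exact hw
  have h4 : cst (tr (c * t)) ≠ 0 := fun h0 => h3 (by rw [h0, map_zero])
  revert h4
  generalize cst (tr (c * t)) = x
  revert x; decide

end MaMUB

namespace MaMUB

open Complex

noncomputable def e4 (k : ℤ) : ℂ := Complex.exp (2 * Real.pi * Complex.I * k / 4)

lemma e4_add (j k : ℤ) : e4 (j + k) = e4 j * e4 k := by
  rw [e4, e4, e4, ← Complex.exp_add]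
  congr 1
  push_cast
  ring

lemma e4_zero : e4 0 = 1 := by simp [e4]

lemma e4_four_mul (j : ℤ) : e4 (4 * j) = 1 := by
  rw [e4, show (2 * (Real.pi:ℂ) * Complex.I * ((4 * j : ℤ) : ℂ) / 4 : ℂ)
      = (j : ℂ) * (2 * (Real.pi:ℂ) * Complex.I) by push_cast; ring,
    Complex.exp_int_mul_two_pi_mul_I]

lemma e4_congr {j k : ℤ} (hjk : ((j - k : ℤ) : ZMod 4) = 0) : e4 j = e4 k := by
  rw [ZMod.intCast_zmod_eq_zero_iff_dvd] at hjk
  obtain ⟨m, hm⟩ := hjk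
  have hj : j = k + 4 * m := by omega
  rw [hj, e4_add, e4_four_mul, mul_one]

lemma e4_conj (k : ℤ) : (starRingEnd ℂ) (e4 k) = e4 (-k) := by
  rw [e4, e4, ← Complex.exp_conj]
  congr 1
  simp only [map_div₀, map_mul, Complex.conj_I, map_ofNat, map_intCast]
  rw [Complex.conj_ofReal]
  push_cast
  ring

lemma e4_two_mul (k : ℤ) : e4 (2 * k) = (-1) ^ k := by
  rw [e4, show (2 * (Real.pi:ℂ) * Complex.I * ((2 * k : ℤ) : ℂ) / 4 : ℂ)
      = (k : ℂ) * ((Real.pi:ℂ) * Complex.I) by push_cast; ring,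
    Complex.exp_int_mul, Complex.exp_pi_mul_I]

noncomputable def chi2 (j : ZMod 2) : ℂ := if j = 0 then 1 else -1

lemma chi2_add (i j : ZMod 2) : chi2 (i + j) = chi2 i * chi2 j := by
  rcases (by decide : ∀ k : ZMod 2, k = 0 ∨ k = 1) i with rfl | rfl <;>
    rcases (by decide : ∀ k : ZMod 2, k = 0 ∨ k = 1) j with rfl | rfl <;>
    simp [chi2, show (1 + 1 : ZMod 2) = 0 from rfl]

lemma chi2_one : chi2 1 = -1 := by simp [chi2]

noncomputable def E4 (m : ZMod 4) : ℂ := e4 (m.val : ℤ)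

lemma val_cast_eq (m : ZMod 4) : ((m.val : ℤ) : ZMod 4) = m := by
  push_cast
  simp only [ZMod.natCast_val, ZMod.cast_id]

lemma E4_add (m m' : ZMod 4) : E4 (m + m') = E4 m * E4 m' := by
  rw [E4, E4, E4, ← e4_add]
  apply e4_congr
  push_cast
  simp only [ZMod.natCast_val, ZMod.cast_id]
  ring

lemma E4_zero : E4 0 = 1 := by
  rw [E4]; simp [ZMod.val_zero, e4_zero]

lemma cst_eq (m : ZMod 4) : cst m = ((m.val : ℕ) : ZMod 2) := by
  conv_lhs => rw [← ZMod.natCast_rightInverse m]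
  rw [map_natCast]

lemma neg_one_pow_val (v : ℕ) : ((-1 : ℂ)) ^ (v : ℤ) = chi2 ((v : ZMod 2)) := by
  rw [zpow_natCast]
  rcases Nat.even_or_odd v with he | ho
  · rw [he.neg_one_pow]
    have h0 : ((v : ℕ) : ZMod 2) = 0 := (ZMod.natCast_eq_zero_iff v 2).mpr he.two_dvd
    simp [chi2, h0]
  · rw [ho.neg_one_pow]
    have h1 : ((v : ℕ) : ZMod 2) = 1 := by
      obtain ⟨t, rfl⟩ := ho
      push_cast
      simp [show (2 : ZMod 2) = 0 from rfl]
    rw [h1, chi2_one]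

lemma E4_two_mul (m : ZMod 4) : E4 (2 * m) = chi2 (cst m) := by
  have h1 : E4 (2 * m) = e4 (2 * (m.val : ℤ)) := by
    rw [E4]
    apply e4_congr
    push_cast
    simp only [ZMod.natCast_val, ZMod.cast_id]
    ring
  rw [h1, e4_two_mul, neg_one_pow_val, cst_eq]

lemma E4_conj (m : ZMod 4) : (starRingEnd ℂ) (E4 m) = e4 (-(m.val : ℤ)) := e4_conj _

lemma E4_mul_conj (m m' : ZMod 4) : E4 m * (starRingEnd ℂ) (E4 m') = E4 (m - m') := by
  rw [E4_conj, E4, E4, ← e4_add]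
  apply e4_congr
  push_cast
  simp only [ZMod.natCast_val, ZMod.cast_id]
  ring

end MaMUB

namespace MaMUB

open scoped InnerProductSpace

variable {n : ℕ} {h : Polynomial (ZMod 4)}

lemma fq_two : (2 : Fq h) = 0 := by
  have h1 : (2 : Fq h) = algebraMap (ZMod 2) (Fq h) 2 := (map_ofNat _ 2).symm
  rw [h1, show (2 : ZMod 2) = 0 by decide, map_zero]

lemma pr_pT (hbp : IsBasicPrimitive n h) {s t : GR h}
    (hs : s ∈ Teich n h) (ht : t ∈ Teich n h) :
    pr h (pT n s t) = pr h s + pr h t := by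
  rw [pT_identity hbp hs ht]
  simp [map_add, map_mul, pr_two]

lemma pT_invol (hbp : IsBasicPrimitive n h) {x y : GR h}
    (hx : x ∈ Teich n h) (hy : y ∈ Teich n h) : pT n (pT n x y) y = x := by
  apply pr_injOn_teich hbp _ (pT_mem hbp _ _) _ hx
  rw [pr_pT hbp (pT_mem hbp x y) hy, pr_pT hbp hx hy]
  linear_combination (pr h y) * (fq_two (h := h))

lemma sqr_zero : sqr n (0 : GR h) = 0 := by
  rw [sqr, zero_pow]
  positivity

lemma cst_two_mul (z : ZMod 4) : cst (2 * z) = 0 := by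
  rw [map_mul, show cst (2 : ZMod 4) = 0 by decide, zero_mul]

lemma chi2_zero : chi2 0 = 1 := by simp [chi2]

lemma chi_sum_zero (hbp : IsBasicPrimitive n h) {σ : GR h → GR h}
    (hσ : ∀ a b : GR h, a ∈ Teich n h → b ∈ Teich n h → σ (a + 2 * b) = a ^ 2 + 2 * b ^ 2)
    {tr : GR h → ZMod 4}
    (htr : ∀ r : GR h, algebraMap (ZMod 4) (GR h) (tr r) = ∑ k ∈ Finset.range n, σ^[k] r)
    {c u : GR h} (hcpr : pr h c ≠ 0) (hu : u ∈ Teich n h) (hu0 : u ≠ 0) :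
    ∑ y ∈ Teich n h, chi2 (cst (tr (c * sqr n (u * y)))) = 0 := by
  obtain ⟨w, hwT, hwu⟩ := teich_inv hbp hu hu0
  have hre : ∑ y ∈ Teich n h, chi2 (cst (tr (c * sqr n (u * y))))
      = ∑ t ∈ Teich n h, chi2 (cst (tr (c * t))) := by
    refine Finset.sum_nbij' (fun y => sqr n (u * y)) (fun t => w * t ^ 2) ?_ ?_ ?_ ?_ ?_
    · intro y hy; exact sqr_mem hbp (teich_mul hbp hu hy)
    · intro t ht; exact teich_mul hbp hwT (teich_pow hbp ht 2)
    · intro y hy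
      rw [sqr_sq hbp (teich_mul hbp hu hy), ← mul_assoc, hwu, one_mul]
    · intro t ht
      have h1 : u * (w * t ^ 2) = t ^ 2 := by rw [← mul_assoc, mul_comm u w, hwu, one_mul]
      rw [h1, sqr, ← pow_mul]
      have h2 : 2 * 2 ^ (n - 1) = 2 ^ n := by
        rw [← pow_succ']
        congr 1
        have := n_pos hbp
        omega
      rw [h2, teich_pow_card hbp ht]
    · intro y hy; rfl
  rw [hre]
  obtain ⟨t₀, ht₀, htr1⟩ := exists_tr_one hbp hσ htr hcpr
  have hflip : ∑ t ∈ Teich n h, chi2 (cst (tr (c * t)))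
      = ∑ t ∈ Teich n h, -chi2 (cst (tr (c * t))) := by
    calc ∑ t ∈ Teich n h, chi2 (cst (tr (c * t)))
        = ∑ t ∈ Teich n h, chi2 (cst (tr (c * pT n t t₀))) := by
          refine Finset.sum_nbij' (fun t => pT n t t₀) (fun t => pT n t t₀) ?_ ?_ ?_ ?_ ?_
          · intro t ht; exact pT_mem hbp _ _
          · intro t ht; exact pT_mem hbp _ _
          · intro t ht; exact pT_invol hbp ht ht₀
          · intro t ht; exact pT_invol hbp ht ht₀
          · intro t ht; rw [pT_invol hbp ht ht₀]
      _ = ∑ t ∈ Teich n h, -chi2 (cst (tr (c * t))) := by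
          refine Finset.sum_congr rfl fun t ht => ?_
          have harg : c * pT n t t₀ = c * t + (c * t₀ + 2 * (c * sqr n (t * t₀))) := by
            rw [pT_identity hbp ht ht₀]; ring
          rw [harg, tr_add hbp hσ htr, tr_add hbp hσ htr, tr_two hbp hσ htr,
            map_add, map_add, cst_two_mul, add_zero, htr1, chi2_add, chi2_one, mul_neg_one]
  have h2 : (2 : ℂ) * ∑ t ∈ Teich n h, chi2 (cst (tr (c * t))) = 0 := by
    rw [Finset.sum_neg_distrib] at hflip
    linear_combination hflip
  have := mul_eq_zero.mp h2
  rcases this with h0 | h0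
  · exact absurd h0 (by norm_num)
  · exact h0

lemma mv_eq (n : ℕ) (h : Polynomial (ZMod 4)) (tr : GR h → ZMod 4) (a b : GR h)
    (x : (Teich n h : Finset (GR h))) :
    mv n h tr a b x
      = (1 / ((Real.sqrt (2 ^ n) : ℝ) : ℂ)) * E4 (tr ((a + 2 * b) * (x : GR h))) := by
  simp only [mv, E4, e4, Int.cast_natCast, PiLp.toLp_apply]

end MaMUB

/-- If `a ≠ a'` in the Teichmüller set, then `|⟨v_{a,b}, v_{a',b'}⟩|² = 2^{−n}`
for all `b, b' ∈ T_n`: the bases `M_a` and `M_{a'}` are mutually unbiased.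
Here `tr` is the trace map of `GR(4,n)`, `tr(x) = ∑_{k<n} σ^k(x)` with
Frobenius `σ(a+2b) = a² + 2b²`. -/
theorem Ma_mutually_unbiased (n : ℕ) (h : Polynomial (ZMod 4))
    (hbp : IsBasicPrimitive n h)
    (σ : GR h → GR h)
    (hσ : ∀ a b : GR h, a ∈ Teich n h → b ∈ Teich n h →
      σ (a + 2 * b) = a ^ 2 + 2 * b ^ 2)
    (tr : GR h → ZMod 4)
    (htr : ∀ r : GR h,
      algebraMap (ZMod 4) (GR h) (tr r) = ∑ k ∈ Finset.range n, σ^[k] r)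
    (a a' : GR h) (ha : a ∈ Teich n h) (ha' : a' ∈ Teich n h) (haa' : a ≠ a')
    (b b' : GR h) (hb : b ∈ Teich n h) (hb' : b' ∈ Teich n h) :
    ‖⟪mv n h tr a b, mv n h tr a' b'⟫_ℂ‖ ^ 2 = 1 / 2 ^ n := by
  classical
  open MaMUB in
  set c : GR h := (a' + 2 * b') - (a + 2 * b) with hc
  have hprc : pr h c ≠ 0 := by
    intro h0
    apply haa'
    apply pr_injOn_teich hbp _ ha _ ha'
    rw [hc, map_sub, sub_eq_zero] at h0
    have e1 : pr h (a + 2 * b) = pr h a := by simp [map_add, map_mul, pr_two]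
    have e2 : pr h (a' + 2 * b') = pr h a' := by simp [map_add, map_mul, pr_two]
    rw [e1, e2] at h0
    exact h0.symm
  set S : ℂ := ∑ x ∈ Teich n h, MaMUB.E4 (tr (c * x)) with hS
  have hconjC : (starRingEnd ℂ) (1 / ((Real.sqrt (2 ^ n) : ℝ) : ℂ))
      = 1 / ((Real.sqrt (2 ^ n) : ℝ) : ℂ) := by
    rw [map_div₀, map_one, Complex.conj_ofReal]
  have hCsq : (1 / ((Real.sqrt (2 ^ n) : ℝ) : ℂ)) * (1 / ((Real.sqrt (2 ^ n) : ℝ) : ℂ))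
      = 1 / (2 ^ n : ℂ) := by
    rw [div_mul_div_comm, one_mul, ← Complex.ofReal_mul, Real.mul_self_sqrt (by positivity)]
    norm_num
  have hterm : ∀ x : (Teich n h : Finset (GR h)),
      ⟪mv n h tr a b x, mv n h tr a' b' x⟫_ℂ
        = (1 / (2 ^ n : ℂ)) * MaMUB.E4 (tr (c * (x : GR h))) := by
    intro x
    rw [RCLike.inner_apply, MaMUB.mv_eq, MaMUB.mv_eq, map_mul, hconjC, mul_mul_mul_comm,
      hCsq]
    rw [MaMUB.E4_mul_conj]
    have harg : tr ((a' + 2 * b') * (x : GR h)) - tr ((a + 2 * b) * (x : GR h))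
        = tr (c * (x : GR h)) := by
      rw [← MaMUB.tr_sub hbp hσ htr]
      congr 1
      rw [hc]; ring
    rw [harg]
  have hip : ⟪mv n h tr a b, mv n h tr a' b'⟫_ℂ = (1 / (2 ^ n : ℂ)) * S := by
    rw [PiLp.inner_apply]
    simp only [hterm]
    rw [← Finset.mul_sum]
    congr 1
    rw [hS]
    exact Finset.sum_coe_sort (Teich n h) (fun x => MaMUB.E4 (tr (c * x)))
  have hSS : S * (starRingEnd ℂ) S = (2 ^ n : ℂ) := by
    rw [hS, map_sum, Finset.sum_mul_sum]
    rw [Finset.sum_comm]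
    have hinner : ∀ y ∈ Teich n h,
        (∑ u ∈ Teich n h,
          MaMUB.E4 (tr (c * u)) * MaMUB.chi2 (MaMUB.cst (tr (c * MaMUB.sqr n (u * y)))))
        = ∑ x ∈ Teich n h,
            MaMUB.E4 (tr (c * x)) * (starRingEnd ℂ) (MaMUB.E4 (tr (c * y))) := by
      intro y hy
      refine Finset.sum_nbij' (fun u => MaMUB.pT n u y) (fun x => MaMUB.pT n x y)
        ?_ ?_ ?_ ?_ ?_
      · intro u hu; exact MaMUB.pT_mem hbp _ _
      · intro x hx; exact MaMUB.pT_mem hbp _ _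
      · intro u hu; exact MaMUB.pT_invol hbp hu hy
      · intro x hx; exact MaMUB.pT_invol hbp hx hy
      · intro u hu
        rw [MaMUB.E4_mul_conj]
        have harg : c * MaMUB.pT n u y = (c * u + 2 * (c * MaMUB.sqr n (u * y))) + c * y := by
          rw [MaMUB.pT_identity hbp hu hy]; ring
        have heq : tr (c * MaMUB.pT n u y) - tr (c * y)
            = tr (c * u) + 2 * tr (c * MaMUB.sqr n (u * y)) := by
          rw [harg, MaMUB.tr_add hbp hσ htr, MaMUB.tr_add hbp hσ htr,
            MaMUB.tr_two hbp hσ htr]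
          ring
        rw [heq, MaMUB.E4_add, MaMUB.E4_two_mul]
    rw [Finset.sum_congr rfl fun y hy => (hinner y hy).symm]
    rw [Finset.sum_comm]
    simp only [← Finset.mul_sum]
    rw [← Finset.add_sum_erase _ _ (MaMUB.zero_mem_teich hbp)]
    have hzero_term : MaMUB.E4 (tr (c * 0)) *
        (∑ y ∈ Teich n h, MaMUB.chi2 (MaMUB.cst (tr (c * MaMUB.sqr n (0 * y))))) = (2 ^ n : ℂ) := by
      rw [mul_zero, MaMUB.tr_zero hbp hσ htr, MaMUB.E4_zero, one_mul]
      have : ∀ y ∈ Teich n h,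
          MaMUB.chi2 (MaMUB.cst (tr (c * MaMUB.sqr n (0 * y)))) = 1 := by
        intro y hy
        rw [zero_mul, MaMUB.sqr_zero, mul_zero, MaMUB.tr_zero hbp hσ htr, map_zero,
          MaMUB.chi2_zero]
      rw [Finset.sum_congr rfl this, Finset.sum_const, MaMUB.teich_card hbp]
      simp
    have hrest : ∑ u ∈ (Teich n h).erase 0, MaMUB.E4 (tr (c * u)) *
        (∑ y ∈ Teich n h, MaMUB.chi2 (MaMUB.cst (tr (c * MaMUB.sqr n (u * y))))) = 0 := by
      refine Finset.sum_eq_zero fun u hu => ?_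
      obtain ⟨hu0, huT⟩ := Finset.mem_erase.mp hu
      rw [MaMUB.chi_sum_zero hbp hσ htr hprc huT hu0, mul_zero]
    rw [hzero_term, hrest, add_zero]
  have hnormSq : Complex.normSq S = (2 ^ n : ℝ) := by
    have h1 : ((Complex.normSq S : ℝ) : ℂ) = ((2 ^ n : ℝ) : ℂ) := by
      rw [Complex.normSq_eq_conj_mul_self, mul_comm, hSS]
      push_cast
      ring
    exact_mod_cast h1
  rw [hip, norm_mul]
  have hA : ‖(1 / (2 ^ n : ℂ))‖ = 1 / (2 ^ n : ℝ) := by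
    rw [show (1 / (2 ^ n : ℂ)) = (((1 / 2 ^ n : ℝ)) : ℂ) by push_cast; ring,
      Complex.norm_real, Real.norm_eq_abs, abs_of_nonneg (by positivity)]
  rw [hA, mul_pow, Complex.sq_norm, hnormSq]
  have h2n : (2 : ℝ) ^ n ≠ 0 := by positivity
  field_simp
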